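/- Let K be a field with char K ≠ 2 and let 𝔤 be a Lie algebra over K. Let Δ be the quotient of the free Lie product of 𝔤 and 𝔤^ψ by the ideal [𝓛, 𝓛], where 𝓛 is the ideal of the free product generated by the elements x − x^ψ. Let Γ = Aug(U(𝔤)) ⋊ 𝔤 be the semidirect product of the augmentation ideal of the universal enveloping algebra U(𝔤), viewed as an abelian Lie algebra on which 𝔤 acts by left multiplication, with 𝔤. Then the homomorphism θ: Δ → Γ defined by θ(x) = (0, x) and θ(x^ψ) = (−x, x) for x ∈ 𝔤 is an isomorphism of Lie algebras, and θ carries 𝓛 onto Aug(U(𝔤)). -/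

import Mathlib

/- Formalization of a statement from "Weak commutativity for Lie algebras"
   (arXiv:1808.10303). All Lie algebras are over a fixed field `K` with `char K ≠ 2`. -/

universe u v

set_option linter.unusedVariables false

attribute [local instance 100] LieRing.ofAssociativeRing

section FreeProduct

variable (K : Type u) [Field K] (g : Type v) [LieRing g] [LieAlgebra K g]

/-- The image of `x ∈ g` (first copy) in the free Lie algebra on two copies of `g`. -/
noncomputable def ofl (x : g) : FreeLieAlgebra K (g ⊕ g) := FreeLieAlgebra.of K (Sum.inl x)

/-- The image of `xᵠ ∈ gᵠ` (second copy) in the free Lie algebra on two copies of `g`. -/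
noncomputable def ofr (x : g) : FreeLieAlgebra K (g ⊕ g) := FreeLieAlgebra.of K (Sum.inr x)

/-- Relators presenting the free Lie product (coproduct) of `g` and its copy `gᵠ` as a
quotient of the free Lie algebra on the disjoint union of two copies of the underlying
type of `g`. -/
def freeProdRelators : Set (FreeLieAlgebra K (g ⊕ g)) :=
  { z | (∃ x y : g, z = ofl K g (x + y) - ofl K g x - ofl K g y)
      ∨ (∃ (c : K) (x : g), z = ofl K g (c • x) - c • ofl K g x)
      ∨ (∃ x y : g, z = ofl K g ⁅x, y⁆ - ⁅ofl K g x, ofl K g y⁆)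
      ∨ (∃ x y : g, z = ofr K g (x + y) - ofr K g x - ofr K g y)
      ∨ (∃ (c : K) (x : g), z = ofr K g (c • x) - c • ofr K g x)
      ∨ (∃ x y : g, z = ofr K g ⁅x, y⁆ - ⁅ofr K g x, ofr K g y⁆) }

/-- The ideal of relations presenting the free Lie product of `g` and `gᵠ`. -/
noncomputable def freeProdIdeal : LieIdeal K (FreeLieAlgebra K (g ⊕ g)) :=
  LieSubmodule.lieSpan K (FreeLieAlgebra K (g ⊕ g)) (freeProdRelators K g)

/-- The free Lie product (coproduct) of `g` and an isomorphic copy `gᵠ`. -/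
abbrev freeLieProd : Type (max u v) := FreeLieAlgebra K (g ⊕ g) ⧸ freeProdIdeal K g

/-- The canonical image of `x ∈ g` in the free Lie product. -/
noncomputable def fpι (x : g) : freeLieProd K g :=
  LieSubmodule.Quotient.mk (N := freeProdIdeal K g) (ofl K g x)

/-- The canonical image of `xᵠ ∈ gᵠ` in the free Lie product. -/
noncomputable def fpψ (x : g) : freeLieProd K g :=
  LieSubmodule.Quotient.mk (N := freeProdIdeal K g) (ofr K g x)

/-- The ideal `𝓛` of the free Lie product generated by the elements `x - xᵠ`. -/
noncomputable def freeProdL : LieIdeal K (freeLieProd K g) :=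
  LieSubmodule.lieSpan K (freeLieProd K g) (Set.range fun x : g => fpι K g x - fpψ K g x)

/-- The Lie algebra `Δ = ⟨g, gᵠ | ⁅𝓛, 𝓛⁆ = 0⟩`: the quotient of the free Lie product of `g`
and `gᵠ` by the ideal `⁅𝓛, 𝓛⁆`. -/
abbrev deltaAlg : Type (max u v) :=
  freeLieProd K g ⧸ (⁅freeProdL K g, freeProdL K g⁆ : LieIdeal K (freeLieProd K g))

/-- The canonical image of `x ∈ g` in `Δ`. -/
noncomputable def deltaι (x : g) : deltaAlg K g :=
  LieSubmodule.Quotient.mk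
    (N := (⁅freeProdL K g, freeProdL K g⁆ : LieIdeal K (freeLieProd K g))) (fpι K g x)

/-- The canonical image of `xᵠ` in `Δ`. -/
noncomputable def deltaψ (x : g) : deltaAlg K g :=
  LieSubmodule.Quotient.mk
    (N := (⁅freeProdL K g, freeProdL K g⁆ : LieIdeal K (freeLieProd K g))) (fpψ K g x)

/-- The image `𝓛̄ ⊆ Δ` of the ideal `𝓛`, i.e. the ideal of `Δ` generated by the elements
`x - xᵠ`. -/
noncomputable def deltaL : LieIdeal K (deltaAlg K g) :=
  LieSubmodule.lieSpan K (deltaAlg K g) (Set.range fun x : g => deltaι K g x - deltaψ K g x)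

end FreeProduct

section Gamma

variable (K : Type u) [Field K] (g : Type v) [LieRing g] [LieAlgebra K g]

/-- The semidirect product Lie ring structure on `U(g) × g`, where the first factor is
regarded as an abelian Lie algebra on which `g` acts by left multiplication (through
`ι : g → U(g)`); the bracket is `⁅(u₁, x₁), (u₂, x₂)⁆ = (x₁·u₂ - x₂·u₁, ⁅x₁, x₂⁆)`. -/
noncomputable instance semidirectLieRing : LieRing (UniversalEnvelopingAlgebra K g × g) where
  bracket p q :=
    (UniversalEnvelopingAlgebra.ι K p.2 * q.1 - UniversalEnvelopingAlgebra.ι K q.2 * p.1,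
      ⁅p.2, q.2⁆)
  add_lie p q r := by
    refine Prod.ext ?_ ?_ <;> dsimp
    · simp only [map_add, add_mul, mul_add]; abel
    · exact add_lie _ _ _
  lie_add p q r := by
    refine Prod.ext ?_ ?_ <;> dsimp
    · simp only [map_add, add_mul, mul_add]; abel
    · exact lie_add _ _ _
  lie_self p := by
    refine Prod.ext ?_ ?_ <;> dsimp <;> simp
  leibniz_lie p q r := by
    have hlie : ∀ a b : g,
        UniversalEnvelopingAlgebra.ι K ⁅a, b⁆
          = UniversalEnvelopingAlgebra.ι K a * UniversalEnvelopingAlgebra.ι K b -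
            UniversalEnvelopingAlgebra.ι K b * UniversalEnvelopingAlgebra.ι K a := by
      intro a b
      rw [LieHom.map_lie, Ring.lie_def]
    refine Prod.ext ?_ ?_ <;> dsimp
    · simp only [hlie, sub_mul, mul_sub, mul_assoc]
      abel
    · exact leibniz_lie _ _ _

/-- The semidirect product Lie algebra structure on `U(g) × g`. -/
noncomputable instance semidirectLieAlgebra :
    LieAlgebra K (UniversalEnvelopingAlgebra K g × g) where
  lie_smul t p q := by
    refine Prod.ext ?_ ?_
    · show UniversalEnvelopingAlgebra.ι K p.2 * (t • q.1) -
          UniversalEnvelopingAlgebra.ι K (t • q.2) * p.1 =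
        t • (UniversalEnvelopingAlgebra.ι K p.2 * q.1 -
          UniversalEnvelopingAlgebra.ι K q.2 * p.1)
      rw [map_smul, smul_sub, mul_smul_comm, smul_mul_assoc]
    · exact lie_smul _ _ _

/-- The augmentation (counit) of the universal enveloping algebra: the unique algebra
homomorphism `U(g) → K` sending the image of `g` to `0`. -/
noncomputable def lieAugmentation : UniversalEnvelopingAlgebra K g →ₐ[K] K :=
  UniversalEnvelopingAlgebra.lift K (0 : g →ₗ⁅K⁆ K)

/-- The Lie algebra `Γ = Aug(U(g)) ⋊ g`: the Lie subalgebra of the semidirect product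
`U(g) ⋊ g` consisting of the pairs whose first component lies in the augmentation
ideal. -/
noncomputable def gammaAlg : LieSubalgebra K (UniversalEnvelopingAlgebra K g × g) :=
  { carrier := { p | lieAugmentation K g p.1 = 0 }
    add_mem' := fun {p q} hp hq => by
      have : lieAugmentation K g (p.1 + q.1) = 0 := by
        rw [map_add]
        rw [Set.mem_setOf_eq] at hp hq
        rw [hp, hq, add_zero]
      exact this
    zero_mem' := by simp
    smul_mem' := fun c p hp => by
      have : lieAugmentation K g (c • p.1) = 0 := by
        rw [map_smul]
        rw [Set.mem_setOf_eq] at hp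
        rw [hp, smul_zero]
      exact this
    lie_mem' := fun {p q} hp hq => by
      rw [Set.mem_setOf_eq] at hp hq ⊢
      show lieAugmentation K g
        (UniversalEnvelopingAlgebra.ι K p.2 * q.1 -
          UniversalEnvelopingAlgebra.ι K q.2 * p.1) = 0
      rw [map_sub, map_mul, map_mul, hp, hq, mul_zero, mul_zero, sub_zero] }

end Gamma


set_option maxHeartbeats 1000000
set_option synthInstance.maxHeartbeats 1000000

section Proof

variable (K : Type u) [Field K] (g : Type v) [LieRing g] [LieAlgebra K g]

/-- Quotient projection as a Lie algebra homomorphism. -/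
noncomputable def lieQuotMk {L : Type*} [LieRing L] [LieAlgebra K L]
    (I : LieIdeal K L) : L →ₗ⁅K⁆ L ⧸ I where
  toLinearMap := (LieSubmodule.Quotient.mk' I).toLinearMap
  map_lie' := by intro x y; exact LieSubmodule.Quotient.mk_bracket (I := I) x y

noncomputable def pi1 : FreeLieAlgebra K (g ⊕ g) →ₗ⁅K⁆ freeLieProd K g :=
  lieQuotMk K (freeProdIdeal K g)

noncomputable def pi2 : freeLieProd K g →ₗ⁅K⁆ deltaAlg K g :=
  lieQuotMk K (⁅freeProdL K g, freeProdL K g⁆ : LieIdeal K (freeLieProd K g))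

noncomputable def piD : FreeLieAlgebra K (g ⊕ g) →ₗ⁅K⁆ deltaAlg K g :=
  (pi2 K g).comp (pi1 K g)

lemma pi1_surj : Function.Surjective (pi1 K g) :=
  fun z => LieSubmodule.Quotient.surjective_mk' _ z

lemma pi2_surj : Function.Surjective (pi2 K g) :=
  fun z => LieSubmodule.Quotient.surjective_mk' _ z

lemma piD_surj : Function.Surjective (piD K g) :=
  (pi2_surj K g).comp (pi1_surj K g)

lemma pi1_rel (z : FreeLieAlgebra K (g ⊕ g)) (hz : z ∈ freeProdRelators K g) :
    pi1 K g z = 0 :=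
  (LieSubmodule.Quotient.mk_eq_zero' (N := freeProdIdeal K g)).mpr
    (LieSubmodule.subset_lieSpan hz)

lemma piD_rel (z : FreeLieAlgebra K (g ⊕ g)) (hz : z ∈ freeProdRelators K g) :
    piD K g z = 0 := by
  rw [piD, LieHom.comp_apply, pi1_rel K g z hz, map_zero]

lemma piD_ofl (x : g) : piD K g (ofl K g x) = deltaι K g x := rfl
lemma piD_ofr (x : g) : piD K g (ofr K g x) = deltaψ K g x := rfl

lemma deltaι_add (x y : g) : deltaι K g (x + y) = deltaι K g x + deltaι K g y := by
  have h := piD_rel K g _ (Or.inl ⟨x, y, rfl⟩)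
  rw [map_sub, map_sub, piD_ofl, piD_ofl, piD_ofl, sub_sub, sub_eq_zero] at h
  exact h

lemma deltaι_smul (c : K) (x : g) : deltaι K g (c • x) = c • deltaι K g x := by
  have h := piD_rel K g _ (Or.inr (Or.inl ⟨c, x, rfl⟩))
  rw [map_sub, map_smul, piD_ofl, piD_ofl, sub_eq_zero] at h
  exact h

lemma deltaι_lie (x y : g) : deltaι K g ⁅x, y⁆ = ⁅deltaι K g x, deltaι K g y⁆ := by
  have h := piD_rel K g _ (Or.inr (Or.inr (Or.inl ⟨x, y, rfl⟩)))
  rw [map_sub, LieHom.map_lie, piD_ofl, piD_ofl, piD_ofl, sub_eq_zero] at h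
  exact h

lemma deltaψ_add (x y : g) : deltaψ K g (x + y) = deltaψ K g x + deltaψ K g y := by
  have h := piD_rel K g _ (Or.inr (Or.inr (Or.inr (Or.inl ⟨x, y, rfl⟩))))
  rw [map_sub, map_sub, piD_ofr, piD_ofr, piD_ofr, sub_sub, sub_eq_zero] at h
  exact h

lemma deltaψ_smul (c : K) (x : g) : deltaψ K g (c • x) = c • deltaψ K g x := by
  have h := piD_rel K g _ (Or.inr (Or.inr (Or.inr (Or.inr (Or.inl ⟨c, x, rfl⟩)))))
  rw [map_sub, map_smul, piD_ofr, piD_ofr, sub_eq_zero] at h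
  exact h

lemma deltaψ_lie (x y : g) : deltaψ K g ⁅x, y⁆ = ⁅deltaψ K g x, deltaψ K g y⁆ := by
  have h := piD_rel K g _ (Or.inr (Or.inr (Or.inr (Or.inr (Or.inr ⟨x, y, rfl⟩)))))
  rw [map_sub, LieHom.map_lie, piD_ofr, piD_ofr, piD_ofr, sub_eq_zero] at h
  exact h

lemma deltaι_zero : deltaι K g 0 = 0 := by
  have := deltaι_smul K g 0 0
  simpa using this

/-- The element `x - xᵠ` of `Δ`. -/
noncomputable def wmap (x : g) : deltaAlg K g := deltaι K g x - deltaψ K g x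

lemma wmap_mem (x : g) : wmap K g x ∈ deltaL K g :=
  LieSubmodule.subset_lieSpan ⟨x, rfl⟩

lemma wmap_add (x y : g) : wmap K g (x + y) = wmap K g x + wmap K g y := by
  simp only [wmap, deltaι_add, deltaψ_add]; abel

lemma wmap_smul (c : K) (x : g) : wmap K g (c • x) = c • wmap K g x := by
  simp only [wmap, deltaι_smul, deltaψ_smul, smul_sub]

/-- The image of `𝓛` in `Δ` as an ideal. -/
noncomputable def imgL : LieIdeal K (deltaAlg K g) :=
  { Submodule.map ((pi2 K g) : freeLieProd K g →ₗ[K] deltaAlg K g)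
      (freeProdL K g : Submodule K (freeLieProd K g)) with
    lie_mem := by
      rintro x m hm
      obtain ⟨a, ha, rfl⟩ := hm
      obtain ⟨x', rfl⟩ := pi2_surj K g x
      exact ⟨⁅x', a⁆, (freeProdL K g).lie_mem ha, (pi2 K g).map_lie x' a⟩ }

lemma deltaL_le_imgL : deltaL K g ≤ imgL K g := by
  apply (LieSubmodule.lieSpan_le (N := imgL K g)).mpr
  rintro _ ⟨x, rfl⟩
  exact ⟨fpι K g x - fpψ K g x, LieSubmodule.subset_lieSpan ⟨x, rfl⟩, by rw [map_sub]; rfl⟩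

lemma deltaL_abelian {a b : deltaAlg K g} (ha : a ∈ deltaL K g) (hb : b ∈ deltaL K g) :
    ⁅a, b⁆ = 0 := by
  obtain ⟨a', ha', rfl⟩ := deltaL_le_imgL K g ha
  obtain ⟨b', hb', rfl⟩ := deltaL_le_imgL K g hb
  show ⁅pi2 K g a', pi2 K g b'⁆ = 0
  rw [← LieHom.map_lie]
  exact (LieSubmodule.Quotient.mk_eq_zero'
    (N := (⁅freeProdL K g, freeProdL K g⁆ : LieIdeal K (freeLieProd K g)))).mpr
    (LieSubmodule.lie_mem_lie ha' hb')

lemma w_cocycle (x y : g) :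
    wmap K g ⁅x, y⁆ = ⁅deltaι K g x, wmap K g y⁆ - ⁅deltaι K g y, wmap K g x⁆ := by
  have h0 : ⁅wmap K g x, wmap K g y⁆ = 0 :=
    deltaL_abelian K g (wmap_mem K g x) (wmap_mem K g y)
  have h1 : ⁅deltaι K g y, wmap K g x⁆ = -⁅wmap K g x, deltaψ K g y⁆ := by
    rw [← lie_skew]
    have h2 : deltaι K g y = wmap K g y + deltaψ K g y := by rw [wmap]; abel
    rw [h2, lie_add, h0, zero_add]
  rw [wmap, deltaι_lie, deltaψ_lie, h1]
  simp only [wmap, lie_sub, sub_lie]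
  abel

/-- The action of `x ∈ g` on `Δ × K` combining the adjoint action with the cocycle `w`. -/
noncomputable def DmapAux (x : g) : Module.End K (deltaAlg K g × K) where
  toFun p := (⁅deltaι K g x, p.1⁆ + p.2 • wmap K g x, 0)
  map_add' p q := by
    refine Prod.ext ?_ ?_
    · show ⁅deltaι K g x, p.1 + q.1⁆ + (p.2 + q.2) • wmap K g x
        = (⁅deltaι K g x, p.1⁆ + p.2 • wmap K g x) + (⁅deltaι K g x, q.1⁆ + q.2 • wmap K g x)
      rw [lie_add, add_smul]; abel
    · show (0 : K) = 0 + 0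
      simp
  map_smul' c p := by
    refine Prod.ext ?_ ?_
    · show ⁅deltaι K g x, c • p.1⁆ + (c • p.2) • wmap K g x
        = c • (⁅deltaι K g x, p.1⁆ + p.2 • wmap K g x)
      rw [lie_smul, smul_add, smul_smul, smul_eq_mul]
    · show (0 : K) = c • 0
      simp

noncomputable def Dmap : g →ₗ⁅K⁆ Module.End K (deltaAlg K g × K) where
  toFun := DmapAux K g
  map_add' x y := by
    refine LinearMap.ext fun p => ?_
    refine Prod.ext ?_ ?_
    · show ⁅deltaι K g (x + y), p.1⁆ + p.2 • wmap K g (x + y)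
        = (⁅deltaι K g x, p.1⁆ + p.2 • wmap K g x) + (⁅deltaι K g y, p.1⁆ + p.2 • wmap K g y)
      rw [deltaι_add, wmap_add, add_lie, smul_add]; abel
    · show (0 : K) = 0 + 0
      simp
  map_smul' c x := by
    refine LinearMap.ext fun p => ?_
    refine Prod.ext ?_ ?_
    · show ⁅deltaι K g (c • x), p.1⁆ + p.2 • wmap K g (c • x)
        = c • (⁅deltaι K g x, p.1⁆ + p.2 • wmap K g x)
      rw [deltaι_smul, wmap_smul, smul_lie, smul_add, smul_comm p.2 c]
    · show (0 : K) = c • 0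
      simp
  map_lie' := by
    intro x y
    refine LinearMap.ext fun p => ?_
    refine Prod.ext ?_ ?_
    · show ⁅deltaι K g ⁅x, y⁆, p.1⁆ + p.2 • wmap K g ⁅x, y⁆
        = (⁅deltaι K g x, ⁅deltaι K g y, p.1⁆ + p.2 • wmap K g y⁆ + (0 : K) • wmap K g x)
          - (⁅deltaι K g y, ⁅deltaι K g x, p.1⁆ + p.2 • wmap K g x⁆ + (0 : K) • wmap K g y)
      rw [deltaι_lie, lie_lie, w_cocycle]
      simp only [lie_add, lie_smul, zero_smul, smul_sub, add_zero]
      abel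
    · show (0 : K) = 0 - 0
      simp

noncomputable def rho : UniversalEnvelopingAlgebra K g →ₐ[K] Module.End K (deltaAlg K g × K) :=
  UniversalEnvelopingAlgebra.lift K (Dmap K g)

lemma rho_ι (x : g) : rho K g (UniversalEnvelopingAlgebra.ι K x) = DmapAux K g x :=
  UniversalEnvelopingAlgebra.lift_ι_apply K (Dmap K g) x

noncomputable def jAdj : Subalgebra K (UniversalEnvelopingAlgebra K g) :=
  Algebra.adjoin K (Set.range (UniversalEnvelopingAlgebra.ι K (L := g)))

noncomputable def jmap : g →ₗ⁅K⁆ ↥(jAdj K g) where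
  toFun x := ⟨UniversalEnvelopingAlgebra.ι K x, Algebra.subset_adjoin ⟨x, rfl⟩⟩
  map_add' x y := Subtype.ext (by simp)
  map_smul' c x := Subtype.ext (by simp)
  map_lie' {x y} := Subtype.ext (by
    show UniversalEnvelopingAlgebra.ι K ⁅x, y⁆ = _
    rw [LieHom.map_lie, Ring.lie_def]
    rfl)

lemma adjoin_range_ι_eq_top :
    Algebra.adjoin K (Set.range (UniversalEnvelopingAlgebra.ι K (L := g))) = ⊤ := by
  have h : (jAdj K g).val.comp (UniversalEnvelopingAlgebra.lift K (jmap K g))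
      = AlgHom.id K (UniversalEnvelopingAlgebra K g) := by
    apply UniversalEnvelopingAlgebra.hom_ext
    refine LieHom.ext fun x => ?_
    show (jAdj K g).val ((UniversalEnvelopingAlgebra.lift K (jmap K g))
      (UniversalEnvelopingAlgebra.ι K x)) = UniversalEnvelopingAlgebra.ι K x
    rw [UniversalEnvelopingAlgebra.lift_ι_apply]
    rfl
  rw [eq_top_iff]
  intro u _
  have hu : (jAdj K g).val ((UniversalEnvelopingAlgebra.lift K (jmap K g)) u) = u := by
    rw [← AlgHom.comp_apply, h]; rfl
  rw [← hu]
  exact ((UniversalEnvelopingAlgebra.lift K (jmap K g)) u).2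

lemma uea_induction (P : UniversalEnvelopingAlgebra K g → Prop)
    (h1 : P 1) (h0 : P 0)
    (hadd : ∀ u v, P u → P v → P (u + v))
    (hsmul : ∀ (c : K) u, P u → P (c • u))
    (hmul : ∀ (x : g) u, P u → P (UniversalEnvelopingAlgebra.ι K x * u)) :
    ∀ u, P u := by
  intro u
  have hu : u ∈ Submodule.span K
      ((Submonoid.closure (Set.range (UniversalEnvelopingAlgebra.ι K (L := g)))
        : Submonoid (UniversalEnvelopingAlgebra K g)) : Set (UniversalEnvelopingAlgebra K g)) := by
    rw [← Algebra.adjoin_eq_span, adjoin_range_ι_eq_top, Algebra.top_toSubmodule]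
    exact Submodule.mem_top
  refine Submodule.span_induction ?_ h0 (fun a b _ _ ha hb => hadd a b ha hb)
    (fun c a _ ha => hsmul c a ha) hu
  intro m hm
  induction hm using Submonoid.closure_induction_left with
  | one => exact h1
  | mul_left a ha y hy ih =>
    obtain ⟨x, rfl⟩ := ha
    exact hmul x y ih

lemma aug_ι (x : g) : lieAugmentation K g (UniversalEnvelopingAlgebra.ι K x) = 0 := by
  have h : lieAugmentation K g (UniversalEnvelopingAlgebra.ι K x)
      = (0 : g →ₗ⁅K⁆ K) x := UniversalEnvelopingAlgebra.lift_ι_apply K 0 x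
  simpa using h

lemma rho_snd : ∀ (u : UniversalEnvelopingAlgebra K g) (p : deltaAlg K g × K),
    (rho K g u p).2 = lieAugmentation K g u * p.2 := by
  refine uea_induction K g _ ?_ ?_ ?_ ?_ ?_
  · intro p; simp
  · intro p; simp
  · intro u v hu hv p
    simp [map_add, LinearMap.add_apply, hu, hv, add_mul]
  · intro c u hu p
    simp [map_smul, LinearMap.smul_apply, hu, smul_eq_mul, mul_assoc]
  · intro x u hu p
    rw [map_mul, Module.End.mul_apply, rho_ι, map_mul, aug_ι, zero_mul, zero_mul]
    rfl

lemma rho_fst_mem : ∀ (u : UniversalEnvelopingAlgebra K g) (p : deltaAlg K g × K),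
    p.1 ∈ deltaL K g → (rho K g u p).1 ∈ deltaL K g := by
  refine uea_induction K g _ ?_ ?_ ?_ ?_ ?_
  · intro p hp; simpa using hp
  · intro p hp; simp
  · intro u v hu hv p hp
    rw [map_add, LinearMap.add_apply]
    exact (deltaL K g).add_mem (hu p hp) (hv p hp)
  · intro c u hu p hp
    rw [map_smul, LinearMap.smul_apply]
    exact (deltaL K g).smul_mem c (hu p hp)
  · intro x u hu p hp
    rw [map_mul, Module.End.mul_apply, rho_ι]
    refine (deltaL K g).add_mem ((deltaL K g).lie_mem (hu p hp))
      ((deltaL K g).smul_mem _ (wmap_mem K g x))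

/-- The `U(g)`-module map `U(g) → Δ` sending `u` to `u · (x - xᵠ)`-type elements. -/
noncomputable def phihat (u : UniversalEnvelopingAlgebra K g) : deltaAlg K g :=
  (rho K g u (0, 1)).1

lemma phihat_one : phihat K g 1 = 0 := by simp [phihat]

lemma phihat_zero : phihat K g 0 = 0 := by simp [phihat]

lemma phihat_add (u v : UniversalEnvelopingAlgebra K g) :
    phihat K g (u + v) = phihat K g u + phihat K g v := by
  simp [phihat, map_add]

lemma phihat_sub (u v : UniversalEnvelopingAlgebra K g) :
    phihat K g (u - v) = phihat K g u - phihat K g v := by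
  simp [phihat, map_sub]

lemma phihat_smul (c : K) (u : UniversalEnvelopingAlgebra K g) :
    phihat K g (c • u) = c • phihat K g u := by
  simp [phihat, map_smul]

lemma phihat_neg (u : UniversalEnvelopingAlgebra K g) :
    phihat K g (-u) = -phihat K g u := by
  simp [phihat, map_neg]

lemma phihat_mem (u : UniversalEnvelopingAlgebra K g) : phihat K g u ∈ deltaL K g :=
  rho_fst_mem K g u (0, 1) (Submodule.zero_mem _)

lemma phihat_ι (x : g) : phihat K g (UniversalEnvelopingAlgebra.ι K x) = wmap K g x := by
  rw [phihat, rho_ι]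
  show ⁅deltaι K g x, (0 : deltaAlg K g)⁆ + (1 : K) • wmap K g x = wmap K g x
  rw [lie_zero, one_smul, zero_add]

lemma phihat_mul_ι (x : g) (u : UniversalEnvelopingAlgebra K g) :
    phihat K g (UniversalEnvelopingAlgebra.ι K x * u)
      = ⁅deltaι K g x, phihat K g u⁆ + lieAugmentation K g u • wmap K g x := by
  rw [phihat, map_mul, Module.End.mul_apply, rho_ι]
  show ⁅deltaι K g x, (rho K g u (0, 1)).1⁆ + (rho K g u (0, 1)).2 • wmap K g x = _
  rw [rho_snd, mul_one]
  rfl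

lemma prod_lie_def (p q : UniversalEnvelopingAlgebra K g × g) :
    ⁅p, q⁆ = (UniversalEnvelopingAlgebra.ι K p.2 * q.1
      - UniversalEnvelopingAlgebra.ι K q.2 * p.1, ⁅p.2, q.2⁆) := rfl

lemma gamma_mem_iff (p : UniversalEnvelopingAlgebra K g × g) :
    p ∈ gammaAlg K g ↔ lieAugmentation K g p.1 = 0 := Iff.rfl

/-- The inverse homomorphism `η : Γ → Δ`. -/
noncomputable def etaMap : ↥(gammaAlg K g) →ₗ⁅K⁆ deltaAlg K g where
  toFun p := phihat K g (p : UniversalEnvelopingAlgebra K g × g).1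
    + deltaι K g (p : UniversalEnvelopingAlgebra K g × g).2
  map_add' p q := by
    show phihat K g ((p : UniversalEnvelopingAlgebra K g × g).1
          + (q : UniversalEnvelopingAlgebra K g × g).1)
        + deltaι K g ((p : UniversalEnvelopingAlgebra K g × g).2
          + (q : UniversalEnvelopingAlgebra K g × g).2)
      = (phihat K g (p : UniversalEnvelopingAlgebra K g × g).1
          + deltaι K g (p : UniversalEnvelopingAlgebra K g × g).2)
        + (phihat K g (q : UniversalEnvelopingAlgebra K g × g).1
          + deltaι K g (q : UniversalEnvelopingAlgebra K g × g).2)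
    rw [phihat_add, deltaι_add]
    abel
  map_smul' c p := by
    show phihat K g (c • (p : UniversalEnvelopingAlgebra K g × g).1)
        + deltaι K g (c • (p : UniversalEnvelopingAlgebra K g × g).2)
      = c • (phihat K g (p : UniversalEnvelopingAlgebra K g × g).1
          + deltaι K g (p : UniversalEnvelopingAlgebra K g × g).2)
    rw [phihat_smul, deltaι_smul, smul_add]
  map_lie' := by
    intro p q
    have hval : ((⁅p, q⁆ : ↥(gammaAlg K g)) : UniversalEnvelopingAlgebra K g × g)
        = ⁅(p : UniversalEnvelopingAlgebra K g × g), (q : UniversalEnvelopingAlgebra K g × g)⁆ :=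
      rfl
    obtain ⟨⟨u, x⟩, hp⟩ := p
    obtain ⟨⟨v, y⟩, hq⟩ := q
    have hu : lieAugmentation K g u = 0 := hp
    have hv : lieAugmentation K g v = 0 := hq
    show phihat K g (UniversalEnvelopingAlgebra.ι K x * v
        - UniversalEnvelopingAlgebra.ι K y * u) + deltaι K g ⁅x, y⁆
      = ⁅phihat K g u + deltaι K g x, phihat K g v + deltaι K g y⁆
    have habel : ⁅phihat K g u, phihat K g v⁆ = 0 :=
      deltaL_abelian K g (phihat_mem K g u) (phihat_mem K g v)
    have hskew : ⁅phihat K g u, deltaι K g y⁆ = -⁅deltaι K g y, phihat K g u⁆ :=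
      (lie_skew _ _).symm
    rw [phihat_sub, phihat_mul_ι, phihat_mul_ι, hu, hv, zero_smul, zero_smul, add_zero,
      add_zero, deltaι_lie, add_lie, lie_add, lie_add, habel, hskew]
    abel

end Proof

/-- The homomorphism `θ : Δ → Γ = Aug(U(g)) ⋊ g` defined by `θ(x) = (0, x)`
and `θ(xᵠ) = (-x, x)` is an isomorphism of Lie algebras, carrying the ideal `𝓛` (generated
by the elements `x - xᵠ`) onto `Aug(U(g))` (the elements of `Γ` with vanishing second
component). -/
theorem delta_iso_aug_semidirect
    (K : Type u) [Field K] (hchar : ringChar K ≠ 2)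
    (g : Type v) [LieRing g] [LieAlgebra K g]
    (θ : deltaAlg K g →ₗ⁅K⁆ ↥(gammaAlg K g))
    (hθι : ∀ x : g,
      ((θ (deltaι K g x) : UniversalEnvelopingAlgebra K g × g)) = (0, x))
    (hθψ : ∀ x : g,
      ((θ (deltaψ K g x) : UniversalEnvelopingAlgebra K g × g))
        = (-(UniversalEnvelopingAlgebra.ι K x), x)) :
    Function.Bijective θ ∧
      ∀ z : deltaAlg K g, z ∈ deltaL K g ↔
        ((θ z : UniversalEnvelopingAlgebra K g × g)).2 = 0 := by
  -- θ ∘ φ̂ computes explicitly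
  have hθφ : ∀ u : UniversalEnvelopingAlgebra K g,
      ((θ (phihat K g u) : UniversalEnvelopingAlgebra K g × g))
        = (u - lieAugmentation K g u • 1, 0) := by
    refine uea_induction K g
      (fun u => ((θ (phihat K g u) : UniversalEnvelopingAlgebra K g × g))
        = (u - lieAugmentation K g u • 1, 0)) ?_ ?_ ?_ ?_ ?_
    · rw [phihat_one, map_zero]
      refine Prod.ext ?_ ?_ <;> simp
    · rw [phihat_zero, map_zero]
      refine Prod.ext ?_ ?_ <;> simp
    · intro u v hu hv
      rw [phihat_add, map_add]
      have hc : ((θ (phihat K g u) + θ (phihat K g v) : ↥(gammaAlg K g))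
            : UniversalEnvelopingAlgebra K g × g)
          = (θ (phihat K g u) : UniversalEnvelopingAlgebra K g × g)
            + (θ (phihat K g v) : UniversalEnvelopingAlgebra K g × g) := rfl
      rw [hc, hu, hv]
      refine Prod.ext ?_ (by simp)
      show (u - lieAugmentation K g u • 1) + (v - lieAugmentation K g v • 1)
          = (u + v) - lieAugmentation K g (u + v) • 1
      rw [map_add, add_smul]
      abel
    · intro c u hu
      rw [phihat_smul, map_smul]
      have hc : ((c • θ (phihat K g u) : ↥(gammaAlg K g))
            : UniversalEnvelopingAlgebra K g × g)
          = c • (θ (phihat K g u) : UniversalEnvelopingAlgebra K g × g) := rfl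
      rw [hc, hu]
      refine Prod.ext ?_ (by simp)
      show c • (u - lieAugmentation K g u • 1) = c • u - lieAugmentation K g (c • u) • 1
      rw [map_smul, smul_sub, smul_assoc]
    · intro x u hu
      rw [phihat_mul_ι, map_add, LieHom.map_lie, map_smul]
      have hw : ((θ (wmap K g x) : ↥(gammaAlg K g)) : UniversalEnvelopingAlgebra K g × g)
          = (UniversalEnvelopingAlgebra.ι K x, 0) := by
        rw [wmap, map_sub]
        have hc : ((θ (deltaι K g x) - θ (deltaψ K g x) : ↥(gammaAlg K g))
              : UniversalEnvelopingAlgebra K g × g)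
            = (θ (deltaι K g x) : UniversalEnvelopingAlgebra K g × g)
              - (θ (deltaψ K g x) : UniversalEnvelopingAlgebra K g × g) := rfl
        rw [hc, hθι, hθψ]
        refine Prod.ext (by simp) (by simp)
      have hc : ((⁅θ (deltaι K g x), θ (phihat K g u)⁆
            + lieAugmentation K g u • θ (wmap K g x) : ↥(gammaAlg K g))
            : UniversalEnvelopingAlgebra K g × g)
          = ⁅(θ (deltaι K g x) : UniversalEnvelopingAlgebra K g × g),
              (θ (phihat K g u) : UniversalEnvelopingAlgebra K g × g)⁆
            + lieAugmentation K g u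
              • (θ (wmap K g x) : UniversalEnvelopingAlgebra K g × g) := rfl
      rw [hc, hθι, hu, hw, prod_lie_def]
      refine Prod.ext ?_ (by simp)
      show UniversalEnvelopingAlgebra.ι K x * (u - lieAugmentation K g u • 1)
          - UniversalEnvelopingAlgebra.ι K (0 : g) * 0
          + lieAugmentation K g u • UniversalEnvelopingAlgebra.ι K x
        = UniversalEnvelopingAlgebra.ι K x * u
          - lieAugmentation K g (UniversalEnvelopingAlgebra.ι K x * u) • 1
      rw [map_mul, aug_ι, zero_mul, zero_smul, sub_zero, mul_zero, sub_zero,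
        mul_sub, mul_smul_comm, mul_one]
      abel
  -- η ∘ θ = id
  have hetaθ : ∀ z : deltaAlg K g, etaMap K g (θ z) = z := by
    have hhom : ((etaMap K g).comp θ).comp (piD K g) = piD K g := by
      refine FreeLieAlgebra.hom_ext fun z => ?_
      rcases z with x | x
      · show etaMap K g (θ (deltaι K g x)) = deltaι K g x
        show phihat K g (θ (deltaι K g x) : UniversalEnvelopingAlgebra K g × g).1
            + deltaι K g (θ (deltaι K g x) : UniversalEnvelopingAlgebra K g × g).2
          = deltaι K g x
        rw [hθι]
        show phihat K g 0 + deltaι K g x = deltaι K g x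
        rw [phihat_zero, zero_add]
      · show etaMap K g (θ (deltaψ K g x)) = deltaψ K g x
        show phihat K g (θ (deltaψ K g x) : UniversalEnvelopingAlgebra K g × g).1
            + deltaι K g (θ (deltaψ K g x) : UniversalEnvelopingAlgebra K g × g).2
          = deltaψ K g x
        rw [hθψ]
        show phihat K g (-(UniversalEnvelopingAlgebra.ι K x)) + deltaι K g x = deltaψ K g x
        rw [phihat_neg, phihat_ι, wmap]
        abel
    intro z
    obtain ⟨w, rfl⟩ := piD_surj K g z
    exact DFunLike.congr_fun hhom w
  refine ⟨⟨?_, ?_⟩, ?_⟩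
  · intro a b hab
    have h := congrArg (etaMap K g) hab
    rwa [hetaθ, hetaθ] at h
  · intro p
    refine ⟨etaMap K g p, ?_⟩
    have hp2 : lieAugmentation K g (p : UniversalEnvelopingAlgebra K g × g).1 = 0 := p.2
    apply Subtype.ext
    show ((θ (phihat K g (p : UniversalEnvelopingAlgebra K g × g).1
        + deltaι K g (p : UniversalEnvelopingAlgebra K g × g).2) : ↥(gammaAlg K g))
        : UniversalEnvelopingAlgebra K g × g)
      = (p : UniversalEnvelopingAlgebra K g × g)
    rw [map_add]
    have hc : ((θ (phihat K g (p : UniversalEnvelopingAlgebra K g × g).1)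
          + θ (deltaι K g (p : UniversalEnvelopingAlgebra K g × g).2) : ↥(gammaAlg K g))
          : UniversalEnvelopingAlgebra K g × g)
        = (θ (phihat K g (p : UniversalEnvelopingAlgebra K g × g).1)
            : UniversalEnvelopingAlgebra K g × g)
          + (θ (deltaι K g (p : UniversalEnvelopingAlgebra K g × g).2)
            : UniversalEnvelopingAlgebra K g × g) := rfl
    rw [hc, hθφ, hθι, hp2]
    refine Prod.ext (by simp) (by simp)
  · intro z
    constructor
    · intro hz
      let S : LieIdeal K (deltaAlg K g) :=
        { carrier := {w : deltaAlg K g |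
            ((θ w : UniversalEnvelopingAlgebra K g × g)).2 = 0}
          add_mem' := by
            intro a b ha hb
            simp only [Set.mem_setOf_eq] at ha hb ⊢
            rw [map_add]
            show ((θ a : UniversalEnvelopingAlgebra K g × g)
              + (θ b : UniversalEnvelopingAlgebra K g × g)).2 = 0
            rw [Prod.snd_add, ha, hb, add_zero]
          zero_mem' := by
            simp only [Set.mem_setOf_eq, map_zero]
            rfl
          smul_mem' := by
            intro c a ha
            simp only [Set.mem_setOf_eq] at ha ⊢
            rw [map_smul]
            show (c • (θ a : UniversalEnvelopingAlgebra K g × g)).2 = 0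
            rw [Prod.smul_snd, ha, smul_zero]
          lie_mem := by
            intro a m hm
            simp only [Set.mem_setOf_eq] at hm ⊢
            rw [LieHom.map_lie]
            show (⁅(θ a : UniversalEnvelopingAlgebra K g × g),
              (θ m : UniversalEnvelopingAlgebra K g × g)⁆).2 = 0
            rw [prod_lie_def]
            show ⁅(θ a : UniversalEnvelopingAlgebra K g × g).2,
              (θ m : UniversalEnvelopingAlgebra K g × g).2⁆ = 0
            rw [hm, lie_zero] }
      have hle : deltaL K g ≤ S := by
        apply (LieSubmodule.lieSpan_le (N := S)).mpr
        rintro _ ⟨x, rfl⟩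
        show ((θ (deltaι K g x - deltaψ K g x) : UniversalEnvelopingAlgebra K g × g)).2 = 0
        rw [map_sub]
        show ((θ (deltaι K g x) : UniversalEnvelopingAlgebra K g × g)
          - (θ (deltaψ K g x) : UniversalEnvelopingAlgebra K g × g)).2 = 0
        rw [Prod.snd_sub, hθι, hθψ]
        simp
      exact hle hz
    · intro hz
      have hval : z = phihat K g ((θ z : UniversalEnvelopingAlgebra K g × g)).1 := by
        conv_lhs => rw [← hetaθ z]
        show phihat K g ((θ z : UniversalEnvelopingAlgebra K g × g)).1
            + deltaι K g ((θ z : UniversalEnvelopingAlgebra K g × g)).2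
          = phihat K g ((θ z : UniversalEnvelopingAlgebra K g × g)).1
        rw [hz, deltaι_zero, add_zero]
      rw [hval]
      exact phihat_mem K g _
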